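/- Let V < 0 be continuous with C₂⟨x⟩^{-μ} ≤ −V(x) ≤ C₁⟨x⟩^{-μ} for some 0 < μ < 2. Define M₁ = ∫_{x'}^x |V(s)|^{-1/2} ds and M₂ = ∫_{x'}^x |V(s)|^{-3/2} ds. Then there exists c₁ > 1 (depending only on C₁, C₂, μ) such that c₁^{-1}⟨x⟩^{μ/2}|x−x'| ≤ M₁ ≤ c₁⟨x⟩^{μ/2}|x−x'| and c₁^{-1}⟨x⟩^{3μ/2}|x−x'| ≤ M₂ ≤ c₁⟨x⟩^{3μ/2}|x−x'| whenever x ≥ x' and |x| ≥ |x'|. -/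
import Mathlib


open Set intervalIntegral

lemma mc_cont (p : ℝ) : Continuous fun s : ℝ => (1 + s^2) ^ p := by
  apply Continuous.rpow_const (by continuity)
  intro s; left; positivity

lemma mc_quarter (p : ℝ) (hp : p ≤ 3/2) : (1/8 : ℝ) ≤ (1/4 : ℝ) ^ p := by
  have h8 : ((1:ℝ)/4) ^ ((3:ℝ)/2) = 1/8 := by
    rw [show ((1:ℝ)/4) = ((1:ℝ)/2) ^ (2:ℕ) by norm_num, ← Real.rpow_natCast,
      ← Real.rpow_mul (by norm_num)]
    rw [show (2:ℕ) * ((3:ℝ)/2) = ((3:ℕ):ℝ) by norm_num, Real.rpow_natCast]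
    norm_num
  calc (1/8 : ℝ) = (1/4 : ℝ) ^ ((3:ℝ)/2) := h8.symm
    _ ≤ (1/4 : ℝ) ^ p := Real.rpow_le_rpow_of_exponent_ge (by norm_num) (by norm_num) hp

lemma mc_upper_int (p : ℝ) (hp0 : 0 ≤ p) (x x' : ℝ) (hxx : x' ≤ x) (habs : |x'| ≤ |x|) :
    (∫ s in x'..x, (1 + s^2) ^ p) ≤ (1 + x^2) ^ p * (x - x') := by
  have key : ∀ s ∈ Icc x' x, (1 + s^2) ^ p ≤ (1 + x^2) ^ p := by
    intro s hs
    have hsx : |s| ≤ |x| := by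
      rw [abs_le]
      constructor
      · linarith [neg_abs_le x', hs.1]
      · linarith [le_abs_self x, hs.2]
    have hsq : s^2 ≤ x^2 := by
      have := mul_self_le_mul_self (abs_nonneg s) hsx
      simpa [← sq, sq_abs] using this
    exact Real.rpow_le_rpow (by positivity) (by linarith) hp0
  calc (∫ s in x'..x, (1 + s^2) ^ p) ≤ ∫ _ in x'..x, (1 + x^2) ^ p :=
        intervalIntegral.integral_mono_on hxx ((mc_cont p).intervalIntegrable _ _)
          (intervalIntegrable_const) key
    _ = (x - x') • ((1 + x^2) ^ p) := intervalIntegral.integral_const _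
    _ = (1 + x^2) ^ p * (x - x') := by rw [smul_eq_mul, mul_comm]

lemma mc_lower_int (p : ℝ) (hp0 : 0 ≤ p) (hp : p ≤ 3/2) (x x' : ℝ) (hxx : x' ≤ x)
    (habs : |x'| ≤ |x|) :
    (1/32) * ((1 + x^2) ^ p * (x - x')) ≤ ∫ s in x'..x, (1 + s^2) ^ p := by
  rcases lt_or_ge x 0 with hx | hx
  · -- then x' = x
    have hx'0 : x' < 0 := lt_of_le_of_lt hxx hx
    have : x ≤ x' := by
      rw [abs_of_neg hx'0, abs_of_neg hx] at habs; linarith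
    have hxe : x' = x := le_antisymm hxx this
    simp [hxe]
  · -- 0 ≤ x
    have hx' : -x ≤ x' := by
      have := neg_abs_le x'
      rw [abs_of_nonneg hx] at habs
      linarith [neg_abs_le x']
    have key : ∀ s ∈ Icc (x/2) x, (1/8) * (1 + x^2) ^ p ≤ (1 + s^2) ^ p := by
      intro s hs
      have hs0 : 0 ≤ s := le_trans (by linarith) hs.1
      have hsq : x^2/4 ≤ s^2 := by nlinarith [hs.1]
      have h1 : (1 + x^2)/4 ≤ 1 + s^2 := by nlinarith
      calc (1/8) * (1 + x^2) ^ p ≤ (1/4:ℝ)^p * (1 + x^2) ^ p := by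
            have := mc_quarter p hp
            have hxp : (0:ℝ) ≤ (1 + x^2) ^ p := by positivity
            nlinarith
        _ = ((1 + x^2)/4) ^ p := by
            rw [← Real.mul_rpow (by norm_num) (by positivity)]; ring_nf
        _ ≤ (1 + s^2) ^ p := Real.rpow_le_rpow (by positivity) h1 hp0
    have hint : ∀ a b : ℝ, IntervalIntegrable (fun s : ℝ => (1 + s^2) ^ p) MeasureTheory.volume a b :=
      fun a b => (mc_cont p).intervalIntegrable a b
    rcases le_or_gt (x/2) x' with h2 | h2
    · have hmono : (x - x') * ((1/8) * (1 + x^2) ^ p) ≤ ∫ s in x'..x, (1 + s^2) ^ p := by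
        calc (x - x') * ((1/8) * (1 + x^2) ^ p)
            = ∫ _ in x'..x, (1/8) * (1 + x^2) ^ p := by
              rw [intervalIntegral.integral_const, smul_eq_mul]
          _ ≤ ∫ s in x'..x, (1 + s^2) ^ p :=
              intervalIntegral.integral_mono_on hxx intervalIntegrable_const (hint _ _)
                (fun s hs => key s ⟨le_trans h2 hs.1, hs.2⟩)
      nlinarith [Real.rpow_nonneg (by positivity : (0:ℝ) ≤ 1 + x^2) p]
    · have hsplit : (∫ s in x'..(x/2), (1 + s^2) ^ p) + (∫ s in (x/2)..x, (1 + s^2) ^ p)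
          = ∫ s in x'..x, (1 + s^2) ^ p :=
        intervalIntegral.integral_add_adjacent_intervals (hint _ _) (hint _ _)
      have h1 : (0:ℝ) ≤ ∫ s in x'..(x/2), (1 + s^2) ^ p :=
        intervalIntegral.integral_nonneg (le_of_lt h2) (fun s _ => by positivity)
      have hmono : (x - x/2) * ((1/8) * (1 + x^2) ^ p) ≤ ∫ s in (x/2)..x, (1 + s^2) ^ p := by
        calc (x - x/2) * ((1/8) * (1 + x^2) ^ p)
            = ∫ _ in (x/2)..x, (1/8) * (1 + x^2) ^ p := by
              rw [intervalIntegral.integral_const, smul_eq_mul]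
          _ ≤ ∫ s in (x/2)..x, (1 + s^2) ^ p :=
              intervalIntegral.integral_mono_on (by linarith) intervalIntegrable_const
                (hint _ _) key
      have hxx' : x - x' ≤ 2 * x := by linarith
      nlinarith [Real.rpow_nonneg (by positivity : (0:ℝ) ≤ 1 + x^2) p]

lemma mc_aux (μ C₁ C₂ q : ℝ) (hμ0 : 0 < μ) (hμ2 : μ < 2) (hC₁ : 0 < C₁) (hC₂ : 0 < C₂)
    (hq0 : 0 < q) (hq3 : q ≤ 3)
    (V : ℝ → ℝ) (hV : Continuous V) (hVneg : ∀ x, V x < 0)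
    (hVb : ∀ x : ℝ, C₂ * (1 + x^2) ^ (-(μ/2)) ≤ -V x ∧ -V x ≤ C₁ * (1 + x^2) ^ (-(μ/2)))
    (x x' : ℝ) (hxx : x' ≤ x) (habs : |x'| ≤ |x|) :
    C₁ ^ (-(q/2)) * (1/32) * ((1 + x^2) ^ (q*μ/4) * (x - x'))
        ≤ (∫ s in x'..x, |V s| ^ (-q/2)) ∧
    (∫ s in x'..x, |V s| ^ (-q/2)) ≤ C₂ ^ (-(q/2)) * ((1 + x^2) ^ (q*μ/4) * (x - x')) := by
  set p : ℝ := q*μ/4 with hp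
  have hp0 : 0 ≤ p := by positivity
  have hp32 : p ≤ 3/2 := by
    rw [hp]; nlinarith
  have hVc : Continuous fun s => |V s| ^ (-q/2) :=
    hV.abs.rpow_const fun s => Or.inl (ne_of_gt (abs_pos.mpr (hVneg s).ne))
  have habsV : ∀ s, |V s| = -V s := fun s => abs_of_neg (hVneg s)
  -- pointwise bounds
  have hpt : ∀ s : ℝ, C₁ ^ (-(q/2)) * (1 + s^2) ^ p ≤ |V s| ^ (-q/2) ∧
      |V s| ^ (-q/2) ≤ C₂ ^ (-(q/2)) * (1 + s^2) ^ p := by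
    intro s
    have hbase : (0:ℝ) < (1 + s^2) ^ (-(μ/2)) := by positivity
    have hVpos : (0:ℝ) < -V s := by linarith [hVneg s]
    have hmulrp : ∀ C : ℝ, 0 < C →
        (C * (1 + s^2) ^ (-(μ/2))) ^ (-q/2) = C ^ (-(q/2)) * (1 + s^2) ^ p := by
      intro C hC
      rw [Real.mul_rpow hC.le hbase.le, ← Real.rpow_mul (by positivity)]
      congr 1
      · congr 1; ring
      · congr 1; rw [hp]; ring
    constructor
    · rw [habsV]
      calc C₁ ^ (-(q/2)) * (1 + s^2) ^ p = (C₁ * (1 + s^2) ^ (-(μ/2))) ^ (-q/2) :=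
            (hmulrp C₁ hC₁).symm
        _ ≤ (-V s) ^ (-q/2) :=
            Real.rpow_le_rpow_of_nonpos hVpos (hVb s).2 (by linarith)
    · rw [habsV]
      calc (-V s) ^ (-q/2) ≤ (C₂ * (1 + s^2) ^ (-(μ/2))) ^ (-q/2) :=
            Real.rpow_le_rpow_of_nonpos (by positivity) (hVb s).1 (by linarith)
        _ = C₂ ^ (-(q/2)) * (1 + s^2) ^ p := hmulrp C₂ hC₂
  constructor
  · calc C₁ ^ (-(q/2)) * (1/32) * ((1 + x^2) ^ p * (x - x'))
        = C₁ ^ (-(q/2)) * ((1/32) * ((1 + x^2) ^ p * (x - x'))) := by ring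
      _ ≤ C₁ ^ (-(q/2)) * ∫ s in x'..x, (1 + s^2) ^ p := by
          have := mc_lower_int p hp0 hp32 x x' hxx habs
          exact mul_le_mul_of_nonneg_left this (by positivity)
      _ = ∫ s in x'..x, C₁ ^ (-(q/2)) * (1 + s^2) ^ p :=
          (intervalIntegral.integral_const_mul _ _).symm
      _ ≤ ∫ s in x'..x, |V s| ^ (-q/2) :=
          intervalIntegral.integral_mono_on hxx
            ((continuous_const.mul (mc_cont p)).intervalIntegrable _ _)
            (hVc.intervalIntegrable _ _) (fun s _ => (hpt s).1)
  · calc (∫ s in x'..x, |V s| ^ (-q/2))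
        ≤ ∫ s in x'..x, C₂ ^ (-(q/2)) * (1 + s^2) ^ p :=
          intervalIntegral.integral_mono_on hxx (hVc.intervalIntegrable _ _)
            ((continuous_const.mul (mc_cont p)).intervalIntegrable _ _)
            (fun s _ => (hpt s).2)
      _ = C₂ ^ (-(q/2)) * ∫ s in x'..x, (1 + s^2) ^ p :=
          intervalIntegral.integral_const_mul _ _
      _ ≤ C₂ ^ (-(q/2)) * ((1 + x^2) ^ p * (x - x')) :=
          mul_le_mul_of_nonneg_left (mc_upper_int p hp0 x x' hxx habs) (by positivity)

/-- Comparison of the moments `M₁ = ∫ |V|^{-1/2}` and `M₂ = ∫ |V|^{-3/2}` with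
`⟨x⟩^{μ/2}|x-x'|` and `⟨x⟩^{3μ/2}|x-x'|` respectively, for potentials with
`C₂⟨x⟩^{-μ} ≤ -V ≤ C₁⟨x⟩^{-μ}`, when `x ≥ x'` and `|x| ≥ |x'|`. -/
theorem moments_comparison (μ C₁ C₂ : ℝ) (hμ : μ ∈ Ioo (0:ℝ) 2)
    (hC₁ : 0 < C₁) (hC₂ : 0 < C₂) :
    ∃ c₁ > (1:ℝ), ∀ V : ℝ → ℝ, Continuous V → (∀ x, V x < 0) →
      (∀ x : ℝ, C₂ * (1 + x^2) ^ (-(μ/2)) ≤ -V x ∧ -V x ≤ C₁ * (1 + x^2) ^ (-(μ/2))) →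
      ∀ x x' : ℝ, x' ≤ x → |x'| ≤ |x| →
        (c₁⁻¹ * (1 + x^2) ^ (μ/4) * |x - x'|
            ≤ ∫ s in x'..x, |V s| ^ (-(1:ℝ)/2)) ∧
        ((∫ s in x'..x, |V s| ^ (-(1:ℝ)/2))
            ≤ c₁ * (1 + x^2) ^ (μ/4) * |x - x'|) ∧
        (c₁⁻¹ * (1 + x^2) ^ (3*μ/4) * |x - x'|
            ≤ ∫ s in x'..x, |V s| ^ (-(3:ℝ)/2)) ∧
        ((∫ s in x'..x, |V s| ^ (-(3:ℝ)/2))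
            ≤ c₁ * (1 + x^2) ^ (3*μ/4) * |x - x'|) := by

  obtain ⟨hμ0, hμ2⟩ := hμ
  set A : ℝ := max C₁ 1 with hA
  set B : ℝ := max C₂⁻¹ 1 with hB
  have hA1 : 1 ≤ A := le_max_right _ _
  have hB1 : 1 ≤ B := le_max_right _ _
  have hA32 : 1 ≤ A ^ ((3:ℝ)/2) := Real.one_le_rpow hA1 (by norm_num)
  have hB32 : 1 ≤ B ^ ((3:ℝ)/2) := Real.one_le_rpow hB1 (by norm_num)
  set c₁ : ℝ := 32 * A ^ ((3:ℝ)/2) * B ^ ((3:ℝ)/2) with hc₁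
  have hc1 : 1 < c₁ := by nlinarith
  have hc1pos : 0 < c₁ := by linarith
  -- key constant inequalities, for 0 < q ≤ 3
  have hkey : ∀ q : ℝ, 0 < q → q ≤ 3 →
      C₂ ^ (-(q/2)) ≤ c₁ ∧ c₁⁻¹ ≤ C₁ ^ (-(q/2)) * (1/32) := by
    intro q hq0 hq3
    have hq2 : (0:ℝ) ≤ q/2 := by linarith
    constructor
    · have e1 : C₂ ^ (-(q/2)) = (C₂⁻¹) ^ (q/2) := by
        rw [Real.rpow_neg hC₂.le, Real.inv_rpow hC₂.le]
      calc C₂ ^ (-(q/2)) = (C₂⁻¹) ^ (q/2) := e1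
        _ ≤ B ^ (q/2) := Real.rpow_le_rpow (by positivity) (le_max_left _ _) hq2
        _ ≤ B ^ ((3:ℝ)/2) := Real.rpow_le_rpow_of_exponent_le hB1 (by linarith)
        _ ≤ c₁ := by nlinarith
    · have h32 : 32 * C₁ ^ (q/2) ≤ c₁ := by
        have : C₁ ^ (q/2) ≤ A ^ ((3:ℝ)/2) :=
          calc C₁ ^ (q/2) ≤ A ^ (q/2) :=
                Real.rpow_le_rpow hC₁.le (le_max_left _ _) hq2
            _ ≤ A ^ ((3:ℝ)/2) := Real.rpow_le_rpow_of_exponent_le hA1 (by linarith)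
        nlinarith
      have hCpos : (0:ℝ) < C₁ ^ (q/2) := Real.rpow_pos_of_pos hC₁ _
      have : c₁⁻¹ ≤ (32 * C₁ ^ (q/2))⁻¹ := by
        apply inv_anti₀ (by positivity) h32
      calc c₁⁻¹ ≤ (32 * C₁ ^ (q/2))⁻¹ := this
        _ = C₁ ^ (-(q/2)) * (1/32) := by
            rw [Real.rpow_neg hC₁.le, mul_inv]; ring
  refine ⟨c₁, hc1, ?_⟩
  intro V hV hVneg hVb x x' hxx habs
  have hT1 : (0:ℝ) ≤ (1 + x^2) ^ (1*μ/4) * (x - x') := by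
    have : (0:ℝ) ≤ x - x' := by linarith
    positivity
  have hT3 : (0:ℝ) ≤ (1 + x^2) ^ (3*μ/4) * (x - x') := by
    have : (0:ℝ) ≤ x - x' := by linarith
    positivity
  have habs' : |x - x'| = x - x' := abs_of_nonneg (by linarith)
  have aux1 := mc_aux μ C₁ C₂ 1 hμ0 hμ2 hC₁ hC₂ one_pos (by norm_num) V hV hVneg hVb x x' hxx habs
  have aux3 := mc_aux μ C₁ C₂ 3 hμ0 hμ2 hC₁ hC₂ (by norm_num) (by norm_num) V hV hVneg hVb x x' hxx habs
  obtain ⟨hk1, hk1'⟩ := hkey 1 one_pos (by norm_num)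
  obtain ⟨hk3, hk3'⟩ := hkey 3 (by norm_num) (by norm_num)
  rw [show μ/4 = 1*μ/4 by ring]
  refine ⟨?_, ?_, ?_, ?_⟩
  · calc c₁⁻¹ * (1 + x^2) ^ (1*μ/4) * |x - x'|
        = c₁⁻¹ * ((1 + x^2) ^ (1*μ/4) * (x - x')) := by rw [habs']; ring
      _ ≤ (C₁ ^ (-(1/2:ℝ)) * (1/32)) * ((1 + x^2) ^ (1*μ/4) * (x - x')) :=
          mul_le_mul_of_nonneg_right hk1' hT1
      _ = C₁ ^ (-(1/2:ℝ)) * (1/32) * ((1 + x^2) ^ (1*μ/4) * (x - x')) := by ring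
      _ ≤ _ := aux1.1
  · calc (∫ s in x'..x, |V s| ^ (-(1:ℝ)/2))
        ≤ C₂ ^ (-(1/2:ℝ)) * ((1 + x^2) ^ (1*μ/4) * (x - x')) := aux1.2
      _ ≤ c₁ * ((1 + x^2) ^ (1*μ/4) * (x - x')) := mul_le_mul_of_nonneg_right hk1 hT1
      _ = c₁ * (1 + x^2) ^ (1*μ/4) * |x - x'| := by rw [habs']; ring
  · calc c₁⁻¹ * (1 + x^2) ^ (3*μ/4) * |x - x'|
        = c₁⁻¹ * ((1 + x^2) ^ (3*μ/4) * (x - x')) := by rw [habs']; ring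
      _ ≤ (C₁ ^ (-(3/2:ℝ)) * (1/32)) * ((1 + x^2) ^ (3*μ/4) * (x - x')) :=
          mul_le_mul_of_nonneg_right hk3' hT3
      _ = C₁ ^ (-(3/2:ℝ)) * (1/32) * ((1 + x^2) ^ (3*μ/4) * (x - x')) := by ring
      _ ≤ _ := aux3.1
  · calc (∫ s in x'..x, |V s| ^ (-(3:ℝ)/2))
        ≤ C₂ ^ (-(3/2:ℝ)) * ((1 + x^2) ^ (3*μ/4) * (x - x')) := aux3.2
      _ ≤ c₁ * ((1 + x^2) ^ (3*μ/4) * (x - x')) := mul_le_mul_of_nonneg_right hk3 hT3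
      _ = c₁ * (1 + x^2) ^ (3*μ/4) * |x - x'| := by rw [habs']; ring
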